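/- For every smooth function f : ℝⁿ → ℝ and every x ∈ ℝⁿ, B(x)^{−T}·∇(Lf)(x) = (L^∥_B G)(x) − M_B(x)·G(x), where G is the twisted gradient vector field G(x) = B(x)^{−T}∇f(x). (Twisted intertwining at the level of generators, equation (4.12) of the paper, Euclidean instance.) -/

import Mathlib

open MeasureTheory Real Filter Matrix
open scoped RealInnerProductSpace ContDiff

noncomputable section

abbrev E (n : ℕ) := EuclideanSpace ℝ (Fin n)
open Matrix

def gibbs (n : ℕ) (V : E n → ℝ) : Measure (E n) :=
  MeasureTheory.volume.withDensity fun x => ENNReal.ofReal (Real.exp (-V x))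

def pd {n : ℕ} (f : E n → ℝ) (i : Fin n) (x : E n) : ℝ :=
  fderiv ℝ f x (EuclideanSpace.single i 1)

def Lop {n : ℕ} (V f : E n → ℝ) (x : E n) : ℝ :=
  (∑ i, pd (pd f i) i x) - ⟪gradient V x, gradient f x⟫

def matVec {n : ℕ} (M : Matrix (Fin n) (Fin n) ℝ) (v : E n) : E n :=
  (EuclideanSpace.equiv (Fin n) ℝ).symm (M.mulVec (EuclideanSpace.equiv (Fin n) ℝ v))

def hessM {n : ℕ} (V : E n → ℝ) (x : E n) : Matrix (Fin n) (Fin n) ℝ :=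
  Matrix.of fun i j => pd (pd V j) i x

/-- Partial derivative of a vector field in the `i`-th coordinate direction. -/
def pdV {n : ℕ} (α : E n → E n) (i : Fin n) (x : E n) : E n :=
  fderiv ℝ α x (EuclideanSpace.single i 1)

/-- Partial derivative of a matrix-valued map, entrywise. -/
def pdM {n : ℕ} (A : E n → Matrix (Fin n) (Fin n) ℝ) (i : Fin n) (x : E n) :
    Matrix (Fin n) (Fin n) ℝ :=
  Matrix.of fun k l => fderiv ℝ (fun y => A y k l) x (EuclideanSpace.single i 1)

/-- The operator `L^∥`, applying `L` componentwise to a vector field. -/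
def LparV {n : ℕ} (V : E n → ℝ) (α : E n → E n) (x : E n) : E n :=
  (EuclideanSpace.equiv (Fin n) ℝ).symm fun k => Lop V (fun y => α y k) x

/-- The operator `L^∥` applied entrywise to a matrix-valued map. -/
def LparM {n : ℕ} (V : E n → ℝ) (A : E n → Matrix (Fin n) (Fin n) ℝ) (x : E n) :
    Matrix (Fin n) (Fin n) ℝ :=
  Matrix.of fun k l => Lop V (fun y => A y k l) x

/-- The twisted operator `L^∥_B α = L^∥ α + 2 B^{-T} ∑ i (∂_i B^T)(∂_i α)`. -/
def LparB {n : ℕ} (V : E n → ℝ) (B : E n → Matrix (Fin n) (Fin n) ℝ)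
    (α : E n → E n) (x : E n) : E n :=
  LparV V α x +
    (2 : ℝ) • matVec ((B x)ᵀ)⁻¹ (∑ i, matVec (pdM (fun y => (B y)ᵀ) i x) (pdV α i x))

/-- The matrix `S = Hess V - (L^∥ B^T) B^{-T}`, so that `S = B^T M_B B^{-T}`. -/
def Smat {n : ℕ} (V : E n → ℝ) (B : E n → Matrix (Fin n) (Fin n) ℝ) (x : E n) :
    Matrix (Fin n) (Fin n) ℝ :=
  hessM V x - LparM V (fun y => (B y)ᵀ) x * ((B x)ᵀ)⁻¹

/-- The matrix potential `M_B = B^{-T}(Hess V)B^T - B^{-T}(L^∥ B^T)`. -/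
def MB {n : ℕ} (V : E n → ℝ) (B : E n → Matrix (Fin n) (Fin n) ℝ) (x : E n) :
    Matrix (Fin n) (Fin n) ℝ :=
  ((B x)ᵀ)⁻¹ * hessM V x * (B x)ᵀ - ((B x)ᵀ)⁻¹ * LparM V (fun y => (B y)ᵀ) x

/-- The twisted inner product `⟨u, v⟩_B = ⟨B^T u, B^T v⟩` at the point `x`. -/
def tinner {n : ℕ} (B : E n → Matrix (Fin n) (Fin n) ℝ) (x : E n) (u v : E n) : ℝ :=
  ⟪matVec (B x)ᵀ u, matVec (B x)ᵀ v⟫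

/-- The matrix `𝔹_i = ((∂_i B^T) B^{-T})^T - (∂_i B^T) B^{-T}`. -/
def BBm {n : ℕ} (B : E n → Matrix (Fin n) (Fin n) ℝ) (i : Fin n) (x : E n) :
    Matrix (Fin n) (Fin n) ℝ :=
  (pdM (fun y => (B y)ᵀ) i x * ((B x)ᵀ)⁻¹)ᵀ - pdM (fun y => (B y)ᵀ) i x * ((B x)ᵀ)⁻¹

/-- The matrix `N_B = (1/4) ∑ i 𝔹_i^T 𝔹_i`. -/
def NB {n : ℕ} (B : E n → Matrix (Fin n) (Fin n) ℝ) (x : E n) :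
    Matrix (Fin n) (Fin n) ℝ :=
  (1 / 4 : ℝ) • ∑ i, (BBm B i x)ᵀ * BBm B i x

/-- The symmetric part `S^s = (S + S^T)/2` of the matrix `S`. -/
def Ssym {n : ℕ} (V : E n → ℝ) (B : E n → Matrix (Fin n) (Fin n) ℝ) (x : E n) :
    Matrix (Fin n) (Fin n) ℝ :=
  (1 / 2 : ℝ) • (Smat V B x + (Smat V B x)ᵀ)

section AuxIntertwine
variable {n : ℕ}


theorem contDiff_pd {f : E n → ℝ} (hf : ContDiff ℝ ∞ f) (i : Fin n) :
    ContDiff ℝ ∞ (pd f i) :=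
  (hf.fderiv_right (le_of_eq (by norm_num))).clm_apply contDiff_const

theorem pd_add {f g : E n → ℝ} {x : E n} (hf : DifferentiableAt ℝ f x)
    (hg : DifferentiableAt ℝ g x) (i : Fin n) :
    pd (fun y => f y + g y) i x = pd f i x + pd g i x := by
  unfold pd; rw [fderiv_fun_add hf hg]; simp

theorem pd_mul {f g : E n → ℝ} {x : E n} (hf : DifferentiableAt ℝ f x)
    (hg : DifferentiableAt ℝ g x) (i : Fin n) :
    pd (fun y => f y * g y) i x = pd f i x * g x + f x * pd g i x := by
  unfold pd; rw [fderiv_fun_mul hf hg]; simp; ring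

theorem pd_sum {ι : Type*} (s : Finset ι) {f : ι → E n → ℝ} {x : E n}
    (hf : ∀ j ∈ s, DifferentiableAt ℝ (f j) x) (i : Fin n) :
    pd (fun y => ∑ j ∈ s, f j y) i x = ∑ j ∈ s, pd (f j) i x := by
  unfold pd; rw [fderiv_fun_sum hf]; simp

theorem pd_const (c : ℝ) (i : Fin n) (x : E n) : pd (fun _ => c) i x = 0 := by
  simp [pd]

theorem pd_comm {f : E n → ℝ} (hf : ContDiff ℝ ∞ f) (i j : Fin n) (x : E n) :
    pd (pd f i) j x = pd (pd f j) i x := by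
  have hsymm := (hf.contDiffAt (x := x)).isSymmSndFDerivAt (by simp; exact WithTop.coe_le_coe.mpr le_top)
  have hd : DifferentiableAt ℝ (fderiv ℝ f) x := by
    exact ((hf.fderiv_right (m := ∞) (le_of_eq (by norm_num))).differentiable (by decide)).differentiableAt
  have h1 : ∀ (v w : E n), fderiv ℝ (fun y => fderiv ℝ f y w) x v = fderiv ℝ (fderiv ℝ f) x v w := by
    intro v w
    rw [fderiv_clm_apply hd (differentiableAt_const _)]
    simp
  unfold pd
  rw [h1, h1]
  exact hsymm _ _

theorem gradient_apply (f : E n → ℝ) (x : E n) (k : Fin n) :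
    gradient f x k = pd f k x := by
  have h : ⟪gradient f x, EuclideanSpace.single k (1:ℝ)⟫ = fderiv ℝ f x (EuclideanSpace.single k 1) := by
    unfold gradient
    exact InnerProductSpace.toDual_symm_apply
  rw [EuclideanSpace.inner_single_right] at h
  simpa [pd] using h

theorem real_inner_sum (u v : E n) : ⟪u, v⟫ = ∑ j, u j * v j := by
  simp [PiLp.inner_apply, RCLike.inner_apply, mul_comm]

theorem Lop_eq (V h : E n → ℝ) (x : E n) :
    Lop V h x = (∑ i, pd (pd h i) i x) - ∑ j, pd V j x * pd h j x := by
  unfold Lop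
  rw [real_inner_sum]
  simp [gradient_apply]

theorem matVec_apply (M : Matrix (Fin n) (Fin n) ℝ) (v : E n) (k : Fin n) :
    matVec M v k = ∑ l, M k l * v l := by
  simp [matVec, Matrix.mulVec, dotProduct]

theorem contDiff_fun_prod {ι : Type*} (s : Finset ι) (f : ι → E n → ℝ)
    (hf : ∀ i ∈ s, ContDiff ℝ ∞ (f i)) :
    ContDiff ℝ ∞ (fun y => ∏ i ∈ s, f i y) := by
  classical
  induction s using Finset.induction with
  | empty => simpa using contDiff_const
  | @insert a s' hx ih =>
    simp only [Finset.prod_insert hx]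
    exact (hf a (Finset.mem_insert_self a s')).mul
      (ih fun i hi => hf i (Finset.mem_insert_of_mem hi))

theorem contDiff_det (M : E n → Matrix (Fin n) (Fin n) ℝ)
    (hM : ∀ i j, ContDiff ℝ ∞ fun y => M y i j) :
    ContDiff ℝ ∞ fun y => (M y).det := by
  have : (fun y => (M y).det) =
      fun y => ∑ σ : Equiv.Perm (Fin n), (((Equiv.Perm.sign σ : ℤ) : ℝ)) * ∏ i, M y (σ i) i := by
    funext y; rw [Matrix.det_apply]
    simp [Units.smul_def, zsmul_eq_mul]
  rw [this]
  exact ContDiff.sum fun σ _ =>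
    contDiff_const.mul (contDiff_fun_prod Finset.univ _ fun i _ => hM (σ i) i)

theorem contDiff_inv_entry {B : E n → Matrix (Fin n) (Fin n) ℝ}
    (hB : ∀ i j, ContDiff ℝ ∞ fun x => B x i j) (hBinv : ∀ x, IsUnit (B x).det)
    (k l : Fin n) : ContDiff ℝ ∞ fun y => ((B y)ᵀ)⁻¹ k l := by
  have ha : ∀ i j, ContDiff ℝ ∞ fun y => (B y)ᵀ i j := fun i j => hB j i
  have hdet : ContDiff ℝ ∞ fun y => ((B y)ᵀ).det := contDiff_det _ ha
  have hdn : ∀ y, ((B y)ᵀ).det ≠ 0 := by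
    intro y; rw [Matrix.det_transpose]; exact (hBinv y).ne_zero
  have hadj : ContDiff ℝ ∞ fun y => ((B y)ᵀ).adjugate k l := by
    have : (fun y => ((B y)ᵀ).adjugate k l) =
        fun y => (((B y)ᵀ).updateRow l (Pi.single k 1)).det := by
      funext y; rw [Matrix.adjugate_apply]
    rw [this]
    apply contDiff_det
    intro i j
    by_cases h : i = l
    · subst h; simpa [Matrix.updateRow_apply] using contDiff_const
    · simpa [Matrix.updateRow_apply, h] using ha i j
  have : (fun y => ((B y)ᵀ)⁻¹ k l) =
      fun y => (((B y)ᵀ).det)⁻¹ * ((B y)ᵀ).adjugate k l := by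
    funext y
    rw [Matrix.inv_def, Matrix.smul_apply, Ring.inverse_eq_inv', smul_eq_mul]
  rw [this]
  exact (hdet.inv hdn).mul hadj

theorem Lop_mul (V : E n → ℝ) {u v : E n → ℝ} (hu : ContDiff ℝ ∞ u)
    (hv : ContDiff ℝ ∞ v) (x : E n) :
    Lop V (fun y => u y * v y) x =
      u x * Lop V v x + v x * Lop V u x + 2 * ∑ i, pd u i x * pd v i x := by
  have hud : ∀ y, DifferentiableAt ℝ u y := fun y => (hu.differentiable (by decide)).differentiableAt
  have hvd : ∀ y, DifferentiableAt ℝ v y := fun y => (hv.differentiable (by decide)).differentiableAt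
  have h1 : ∀ i : Fin n, pd (fun y => u y * v y) i =
      fun y => pd u i y * v y + u y * pd v i y := by
    intro i; funext y; exact pd_mul (hud y) (hvd y) i
  have e1 : ∀ i : Fin n, pd (pd (fun y => u y * v y) i) i x =
      pd (pd u i) i x * v x + 2 * (pd u i x * pd v i x) + u x * pd (pd v i) i x := by
    intro i
    rw [h1 i]
    rw [pd_add (((contDiff_pd hu i).mul hv).differentiable (by decide)).differentiableAt
        ((hu.mul (contDiff_pd hv i)).differentiable (by decide)).differentiableAt,
      pd_mul ((contDiff_pd hu i).differentiable (by decide)).differentiableAt (hvd x),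
      pd_mul (hud x) ((contDiff_pd hv i).differentiable (by decide)).differentiableAt]
    ring
  have e2 : ∀ j : Fin n, pd (fun y => u y * v y) j x =
      pd u j x * v x + u x * pd v j x := fun j => pd_mul (hud x) (hvd x) j
  rw [Lop_eq, Lop_eq, Lop_eq]
  rw [Finset.sum_congr rfl (fun i _ => e1 i),
    show (∑ j, pd V j x * pd (fun y => u y * v y) j x)
        = ∑ j, pd V j x * (pd u j x * v x + u x * pd v j x) from
      Finset.sum_congr rfl fun j _ => by rw [e2 j]]
  simp only [Finset.sum_add_distrib, mul_add, mul_sub, ← Finset.sum_mul, ← Finset.mul_sum,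
    mul_left_comm, mul_comm]
  ring

theorem pd_sub {f g : E n → ℝ} {x : E n} (hf : DifferentiableAt ℝ f x)
    (hg : DifferentiableAt ℝ g x) (i : Fin n) :
    pd (fun y => f y - g y) i x = pd f i x - pd g i x := by
  unfold pd; rw [fderiv_fun_sub hf hg]; simp

theorem Lop_sum (V : E n → ℝ) {ι : Type*} (s : Finset ι) (u : ι → E n → ℝ)
    (hu : ∀ j ∈ s, ContDiff ℝ ∞ (u j)) (x : E n) :
    Lop V (fun y => ∑ j ∈ s, u j y) x = ∑ j ∈ s, Lop V (u j) x := by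
  classical
  have h1 : ∀ i : Fin n, pd (fun y => ∑ j ∈ s, u j y) i =
      fun y => ∑ j ∈ s, pd (u j) i y := by
    intro i; funext y
    exact pd_sum s (fun j hj => ((hu j hj).differentiable (by decide)).differentiableAt) i
  rw [Lop_eq]
  rw [show (∑ i, pd (pd (fun y => ∑ j ∈ s, u j y) i) i x)
        = ∑ i, ∑ j ∈ s, pd (pd (u j) i) i x from
      Finset.sum_congr rfl fun i _ => by
        rw [h1 i]
        exact pd_sum s (fun j hj => ((contDiff_pd (hu j hj) i).differentiable
          (by decide)).differentiableAt) i,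
    show (∑ m, pd V m x * pd (fun y => ∑ j ∈ s, u j y) m x)
        = ∑ m, ∑ j ∈ s, pd V m x * pd (u j) m x from
      Finset.sum_congr rfl fun m _ => by rw [h1 m]; exact Finset.mul_sum _ _ _,
    Finset.sum_comm (s := (Finset.univ : Finset (Fin n))) (t := s)
      (f := fun i j => pd (pd (u j) i) i x),
    Finset.sum_comm (s := (Finset.univ : Finset (Fin n))) (t := s)
      (f := fun m j => pd V m x * pd (u j) m x),
    ← Finset.sum_sub_distrib]
  exact Finset.sum_congr rfl fun j hj => (Lop_eq V (u j) x).symm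

theorem Lop_const (V : E n → ℝ) (c : ℝ) (x : E n) : Lop V (fun _ => c) x = 0 := by
  have h : ∀ i : Fin n, pd (fun _ : E n => c) i = fun _ => 0 := by
    intro i; funext y; exact pd_const c i y
  rw [Lop_eq]
  simp [h, pd]

theorem pd_Lop {V f : E n → ℝ} (hV : ContDiff ℝ ∞ V) (hf : ContDiff ℝ ∞ f)
    (m : Fin n) (x : E n) :
    pd (Lop V f) m x = Lop V (pd f m) x - ∑ j, pd (pd V j) m x * pd f j x := by
  have hLf : Lop V f = fun y =>
      (∑ i, pd (pd f i) i y) - ∑ j, pd V j y * pd f j y := by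
    funext y; exact Lop_eq V f y
  have d1 : DifferentiableAt ℝ (fun y => ∑ i, pd (pd f i) i y) x :=
    (DifferentiableAt.fun_sum fun i _ =>
      ((contDiff_pd (contDiff_pd hf i) i).differentiable (by decide)).differentiableAt)
  have d2 : DifferentiableAt ℝ (fun y => ∑ j, pd V j y * pd f j y) x :=
    (DifferentiableAt.fun_sum fun j _ =>
      (((contDiff_pd hV j).mul (contDiff_pd hf j)).differentiable (by decide)).differentiableAt)
  rw [hLf, pd_sub d1 d2 m,
    pd_sum Finset.univ (fun i _ =>
      ((contDiff_pd (contDiff_pd hf i) i).differentiable (by decide)).differentiableAt) m,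
    pd_sum Finset.univ (fun j _ =>
      (((contDiff_pd hV j).mul (contDiff_pd hf j)).differentiable (by decide)).differentiableAt) m]
  have e1 : ∀ i : Fin n, pd (pd (pd f i) i) m x = pd (pd (pd f m) i) i x := by
    intro i
    rw [pd_comm (contDiff_pd hf i) i m]
    congr 1
    funext y
    exact pd_comm hf i m y
  have e2 : ∀ j : Fin n, pd (fun y => pd V j y * pd f j y) m x =
      pd (pd V j) m x * pd f j x + pd V j x * pd (pd f m) j x := by
    intro j
    rw [pd_mul ((contDiff_pd hV j).differentiable (by decide)).differentiableAt
      ((contDiff_pd hf j).differentiable (by decide)).differentiableAt m]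
    rw [pd_comm hf j m]
  rw [Finset.sum_congr rfl (fun i _ => e1 i), Finset.sum_congr rfl (fun j _ => e2 j),
    Lop_eq]
  rw [Finset.sum_add_distrib]
  ring



theorem sum_mulVec' {ι : Type*} (s : Finset ι) (M : ι → Matrix (Fin n) (Fin n) ℝ)
    (v : Fin n → ℝ) : (∑ i ∈ s, M i) *ᵥ v = ∑ i ∈ s, (M i) *ᵥ v := by
  classical
  induction s using Finset.induction with
  | empty => simp
  | @insert a s' hx ih => simp [Finset.sum_insert hx, add_mulVec, ih]

theorem mulVec_sum' {ι : Type*} (s : Finset ι) (M : Matrix (Fin n) (Fin n) ℝ)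
    (v : ι → Fin n → ℝ) : M *ᵥ (∑ i ∈ s, v i) = ∑ i ∈ s, M *ᵥ (v i) := by
  classical
  induction s using Finset.induction with
  | empty => simp
  | @insert a s' hx ih => simp [Finset.sum_insert hx, mulVec_add, ih]

theorem key_algebra (c a H LA Lc : Matrix (Fin n) (Fin n) ℝ)
    (A Dc : Fin n → Matrix (Fin n) (Fin n) ℝ) (g Lg : Fin n → ℝ) (Dg : Fin n → Fin n → ℝ)
    (hca : c * a = 1) (hac : a * c = 1)
    (hDc : ∀ i, a * Dc i = -(A i * c))
    (hLc : a * Lc + LA * c + (2:ℝ) • ∑ i, A i * Dc i = 0) :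
    c *ᵥ (Lg - H *ᵥ g) =
      (c *ᵥ Lg + Lc *ᵥ g + (2:ℝ) • ∑ i, (Dc i) *ᵥ (Dg i))
      + (2:ℝ) • (c *ᵥ (∑ i, (A i) *ᵥ ((Dc i) *ᵥ g + c *ᵥ (Dg i))))
      - (c * H * a - c * LA) *ᵥ (c *ᵥ g) := by
  have hDc' : ∀ i, Dc i = -(c * (A i * c)) := by
    intro i
    have h := congrArg (c * ·) (hDc i)
    simpa [← Matrix.mul_assoc, hca, Matrix.mul_neg] using h
  have h1 : a * Lc = -(LA * c + (2:ℝ) • ∑ i, A i * Dc i) := by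
    rw [add_assoc] at hLc
    exact eq_neg_of_add_eq_zero_left hLc
  have hLc' : Lc = -(c * (LA * c) + (2:ℝ) • (c * ∑ i, A i * Dc i)) := by
    have h := congrArg (c * ·) h1
    simpa [← Matrix.mul_assoc, hca, Matrix.mul_neg, Matrix.mul_add, Matrix.mul_smul] using h
  rw [hLc']
  simp only [hDc']
  simp only [Matrix.mul_neg, Matrix.neg_mul, Matrix.mul_add, Matrix.add_mul, Finset.mul_sum,
    mulVec_add, add_mulVec, mulVec_sub, sub_mulVec, neg_mulVec, mulVec_neg, smul_mulVec,
    mulVec_smul, sum_mulVec', mulVec_sum', mulVec_mulVec, smul_neg, Finset.sum_neg_distrib,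
    Finset.smul_sum]
  simp only [mulVec_mulVec, mul_assoc, hac, mul_one, smul_add, smul_neg,
    add_mul, smul_mul_assoc, neg_mul, neg_mulVec, smul_mulVec,
    Finset.sum_add_distrib, Finset.sum_neg_distrib, sub_mul, sub_mulVec]
  abel

theorem Esum_apply {ι : Type*} (s : Finset ι) (v : ι → E n) (k : Fin n) :
    (∑ i ∈ s, v i) k = ∑ i ∈ s, v i k := by
  classical
  induction s using Finset.induction with
  | empty => rfl
  | @insert a s' hx ih => simp [Finset.sum_insert hx, ih]

theorem mulVec_apply' (M : Matrix (Fin n) (Fin n) ℝ) (w : Fin n → ℝ) (k : Fin n) :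
    (M *ᵥ w) k = ∑ m, M k m * w m := rfl

end AuxIntertwine

/-- **Twisted intertwining at the level of generators** (equation (4.12), Euclidean
instance): `B^{-T} ∇(Lf) = L^∥_B G - M_B G` where `G = B^{-T} ∇f`. -/
theorem twisted_intertwining_generators
    (n : ℕ) (hn : 1 ≤ n) (V : E n → ℝ) (hV : ContDiff ℝ ∞ V)
    (B : E n → Matrix (Fin n) (Fin n) ℝ)
    (hB : ∀ i j, ContDiff ℝ ∞ fun x => B x i j)
    (hBinv : ∀ x, IsUnit (B x).det)
    (f : E n → ℝ) (hf : ContDiff ℝ ∞ f) :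
    ∀ x : E n,
      matVec ((B x)ᵀ)⁻¹ (gradient (Lop V f) x) =
        LparB V B (fun y => matVec ((B y)ᵀ)⁻¹ (gradient f y)) x -
          matVec (MB V B x) (matVec ((B x)ᵀ)⁻¹ (gradient f x)) := by
  classical
  intro x
  have hdetT : ∀ y : E n, IsUnit ((B y)ᵀ).det := fun y => by
    rw [Matrix.det_transpose]; exact hBinv y
  have haF : ∀ m l : Fin n, ContDiff ℝ ∞ fun y => (B y)ᵀ m l := fun m l => hB l m
  have hcF : ∀ k l : Fin n, ContDiff ℝ ∞ fun y => ((B y)ᵀ)⁻¹ k l := fun k l =>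
    contDiff_inv_entry hB hBinv k l
  have hgF : ∀ j, ContDiff ℝ ∞ (pd f j) := fun j => contDiff_pd hf j
  -- components of the twisted gradient
  have hGcomp : ∀ (y : E n) (l : Fin n),
      matVec ((B y)ᵀ)⁻¹ (gradient f y) l = ∑ j, ((B y)ᵀ)⁻¹ l j * pd f j y := by
    intro y l
    rw [matVec_apply]
    exact Finset.sum_congr rfl fun j _ => by rw [gradient_apply]
  have hGF : ∀ l : Fin n, ContDiff ℝ ∞ (fun y => ∑ j, ((B y)ᵀ)⁻¹ l j * pd f j y) :=
    fun l => ContDiff.sum fun j _ => (hcF l j).mul (hgF j)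
  have hG : ContDiff ℝ ∞ fun y => matVec ((B y)ᵀ)⁻¹ (gradient f y) := by
    have hGfun : (fun y => matVec ((B y)ᵀ)⁻¹ (gradient f y))
        = fun y => (EuclideanSpace.equiv (Fin n) ℝ).symm fun l => ∑ j, ((B y)ᵀ)⁻¹ l j * pd f j y := by
      funext y; ext l; rw [hGcomp y l]; rfl
    rw [hGfun]
    exact (ContinuousLinearEquiv.contDiff _).comp (contDiff_pi.mpr fun l => hGF l)
  have hpdVc : ∀ (i l : Fin n),
      pdV (fun y => matVec ((B y)ᵀ)⁻¹ (gradient f y)) i x l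
        = pd (fun y => ∑ j, ((B y)ᵀ)⁻¹ l j * pd f j y) i x := by
    intro i l
    have hd : DifferentiableAt ℝ (fun y => matVec ((B y)ᵀ)⁻¹ (gradient f y)) x :=
      (hG.differentiable (by decide)).differentiableAt
    have h2 := ((EuclideanSpace.proj l (𝕜 := ℝ)).hasFDerivAt.comp x hd.hasFDerivAt).fderiv
    have h3 : pd (fun y => matVec ((B y)ᵀ)⁻¹ (gradient f y) l) i x
        = pdV (fun y => matVec ((B y)ᵀ)⁻¹ (gradient f y)) i x l := by
      show fderiv ℝ ((EuclideanSpace.proj l (𝕜 := ℝ)) ∘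
        (fun y => matVec ((B y)ᵀ)⁻¹ (gradient f y))) x _ = _
      rw [h2]; rfl
    rw [← h3]
    congr 1
    funext y
    exact hGcomp y l
  -- expansion of the derivatives of the twisted gradient components
  have hDgc : ∀ i l : Fin n, pd (fun y => ∑ j, ((B y)ᵀ)⁻¹ l j * pd f j y) i x
      = ∑ j, (pd (fun y => ((B y)ᵀ)⁻¹ l j) i x * pd f j x
          + ((B x)ᵀ)⁻¹ l j * pd (pd f j) i x) := by
    intro i l
    rw [pd_sum Finset.univ (fun j _ =>
      (((hcF l j).mul (hgF j)).differentiable (by decide)).differentiableAt) i]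
    exact Finset.sum_congr rfl fun j _ =>
      pd_mul ((hcF l j).differentiable (by decide)).differentiableAt
        ((hgF j).differentiable (by decide)).differentiableAt i
  have hLopGF : ∀ l : Fin n, Lop V (fun y => ∑ j, ((B y)ᵀ)⁻¹ l j * pd f j y) x
      = ∑ j, (((B x)ᵀ)⁻¹ l j * Lop V (pd f j) x
          + pd f j x * Lop V (fun y => ((B y)ᵀ)⁻¹ l j) x
          + 2 * ∑ i, pd (fun y => ((B y)ᵀ)⁻¹ l j) i x * pd (pd f j) i x) := by
    intro l
    rw [Lop_sum V Finset.univ (fun j y => ((B y)ᵀ)⁻¹ l j * pd f j y)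
      (fun j _ => (hcF l j).mul (hgF j)) x]
    exact Finset.sum_congr rfl fun j _ => Lop_mul V (hcF l j) (hgF j) x
  -- inverse identities
  have hca : ((B x)ᵀ)⁻¹ * (B x)ᵀ = 1 := Matrix.nonsing_inv_mul _ (hdetT x)
  have hac : (B x)ᵀ * ((B x)ᵀ)⁻¹ = 1 := Matrix.mul_nonsing_inv _ (hdetT x)
  have hdelta : ∀ (p j : Fin n), (fun y => ∑ l, (B y)ᵀ p l * ((B y)ᵀ)⁻¹ l j)
      = fun _ => if p = j then (1:ℝ) else 0 := by
    intro p j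
    funext y
    have h2 := congrFun (congrFun (Matrix.mul_nonsing_inv ((B y)ᵀ) (hdetT y)) p) j
    simpa [Matrix.mul_apply, Matrix.one_apply] using h2
  have hDc : ∀ i, (B x)ᵀ * (Matrix.of fun k j => pd (fun y => ((B y)ᵀ)⁻¹ k j) i x)
      = -((pdM (fun y => (B y)ᵀ) i x) * ((B x)ᵀ)⁻¹) := by
    intro i
    ext p j
    have h0 : pd (fun y => ∑ l, (B y)ᵀ p l * ((B y)ᵀ)⁻¹ l j) i x = 0 := by
      rw [hdelta p j]; exact pd_const _ i x
    rw [pd_sum Finset.univ (fun l _ =>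
        (((haF p l).mul (hcF l j)).differentiable (by decide)).differentiableAt) i,
      Finset.sum_congr rfl (fun l (_ : l ∈ Finset.univ) =>
        pd_mul ((haF p l).differentiable (by decide)).differentiableAt
          ((hcF l j).differentiable (by decide)).differentiableAt i),
      Finset.sum_add_distrib] at h0
    have : ∑ l, (B x)ᵀ p l * pd (fun y => ((B y)ᵀ)⁻¹ l j) i x
        = -∑ l, pd (fun y => (B y)ᵀ p l) i x * ((B x)ᵀ)⁻¹ l j := by linarith
    simpa [Matrix.mul_apply, Matrix.neg_apply, pdM, pd, Finset.sum_neg_distrib] using this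
  have hLc : (B x)ᵀ * (Matrix.of fun k j => Lop V (fun y => ((B y)ᵀ)⁻¹ k j) x)
      + (LparM V (fun y => (B y)ᵀ) x) * ((B x)ᵀ)⁻¹
      + (2:ℝ) • ∑ i, (pdM (fun y => (B y)ᵀ) i x)
          * (Matrix.of fun k j => pd (fun y => ((B y)ᵀ)⁻¹ k j) i x) = 0 := by
    ext p j
    have h0 : Lop V (fun y => ∑ l, (B y)ᵀ p l * ((B y)ᵀ)⁻¹ l j) x = 0 := by
      rw [hdelta p j]; exact Lop_const V _ x
    rw [Lop_sum V Finset.univ (fun l y => (B y)ᵀ p l * ((B y)ᵀ)⁻¹ l j)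
        (fun l _ => (haF p l).mul (hcF l j)) x,
      Finset.sum_congr rfl (fun l (_ : l ∈ Finset.univ) =>
        Lop_mul V (haF p l) (hcF l j) x),
      Finset.sum_add_distrib, Finset.sum_add_distrib] at h0
    have goal' : ∑ l, (B x)ᵀ p l * Lop V (fun y => ((B y)ᵀ)⁻¹ l j) x
        + ∑ l, Lop V (fun y => (B y)ᵀ p l) x * ((B x)ᵀ)⁻¹ l j
        + 2 * ∑ i, ∑ l, pd (fun y => (B y)ᵀ p l) i x * pd (fun y => ((B y)ᵀ)⁻¹ l j) i x
        = 0 := by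
      rw [Finset.sum_comm (f := fun i l =>
        pd (fun y => (B y)ᵀ p l) i x * pd (fun y => ((B y)ᵀ)⁻¹ l j) i x)]
      rw [show (∑ l, ∑ i, pd (fun y => (B y)ᵀ p l) i x * pd (fun y => ((B y)ᵀ)⁻¹ l j) i x)
          = ∑ l, (2:ℝ)⁻¹ * (2 * ∑ i, pd (fun y => (B y)ᵀ p l) i x
            * pd (fun y => ((B y)ᵀ)⁻¹ l j) i x) from
        Finset.sum_congr rfl fun l _ => by ring]
      rw [show (∑ l, Lop V (fun y => (B y)ᵀ p l) x * ((B x)ᵀ)⁻¹ l j)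
          = ∑ l, ((B x)ᵀ)⁻¹ l j * Lop V (fun y => (B y)ᵀ p l) x from
        Finset.sum_congr rfl fun l _ => by ring]
      rw [← Finset.mul_sum]
      linarith
    simpa [Matrix.add_apply, Matrix.mul_apply, Matrix.smul_apply, Matrix.sum_apply,
      Matrix.zero_apply, Matrix.of_apply, LparM, pdM, pd, smul_eq_mul, Finset.mul_sum] using goal'
  have key := key_algebra (((B x)ᵀ)⁻¹) ((B x)ᵀ) (hessM V x) (LparM V (fun y => (B y)ᵀ) x)
    (Matrix.of fun k j => Lop V (fun y => ((B y)ᵀ)⁻¹ k j) x)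
    (fun i => pdM (fun y => (B y)ᵀ) i x)
    (fun i => Matrix.of fun k j => pd (fun y => ((B y)ᵀ)⁻¹ k j) i x)
    (fun j => pd f j x) (fun m => Lop V (pd f m) x) (fun i j => pd (pd f j) i x)
    hca hac hDc hLc
  ext k
  have keyk := congrFun key k
  have lhsEq : matVec ((B x)ᵀ)⁻¹ (gradient (Lop V f) x) k
      = ((((B x)ᵀ)⁻¹ : Matrix (Fin n) (Fin n) ℝ) *ᵥ
          ((fun m => Lop V (pd f m) x) - hessM V x *ᵥ fun j => pd f j x)) k := by
    rw [matVec_apply]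
    show _ = ∑ m, ((B x)ᵀ)⁻¹ k m * (Lop V (pd f m) x - ∑ j, hessM V x m j * pd f j x)
    exact Finset.sum_congr rfl fun m _ => by
      rw [gradient_apply, pd_Lop hV hf m x]; rfl
  rw [lhsEq, keyk]
  have t1 : LparV V (fun y => matVec ((B y)ᵀ)⁻¹ (gradient f y)) x k
      = Lop V (fun y => ∑ j, ((B y)ᵀ)⁻¹ k j * pd f j y) x := by
    show Lop V (fun y => matVec ((B y)ᵀ)⁻¹ (gradient f y) k) x = _
    congr 1
    funext y
    exact hGcomp y k
  have eMB : matVec (MB V B x) (matVec ((B x)ᵀ)⁻¹ (gradient f x)) k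
      = ((((B x)ᵀ)⁻¹ * hessM V x * (B x)ᵀ - ((B x)ᵀ)⁻¹ * LparM V (fun y => (B y)ᵀ) x) *ᵥ
          ((((B x)ᵀ)⁻¹ : Matrix (Fin n) (Fin n) ℝ) *ᵥ fun j => pd f j x)) k := by
    rw [matVec_apply, mulVec_apply']
    refine Finset.sum_congr rfl fun l _ => ?_
    rw [show matVec ((B x)ᵀ)⁻¹ (gradient f x) l = ∑ j, ((B x)ᵀ)⁻¹ l j * pd f j x from hGcomp x l]
    rfl
  have eLparB : LparB V B (fun y => matVec ((B y)ᵀ)⁻¹ (gradient f y)) x k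
      = Lop V (fun y => ∑ j, ((B y)ᵀ)⁻¹ k j * pd f j y) x
        + 2 * ∑ m, ((B x)ᵀ)⁻¹ k m * ∑ i, ∑ l, pdM (fun y => (B y)ᵀ) i x m l *
            pd (fun y => ∑ j, ((B y)ᵀ)⁻¹ l j * pd f j y) i x := by
    show LparV V (fun y => matVec ((B y)ᵀ)⁻¹ (gradient f y)) x k
        + ((2:ℝ) • matVec ((B x)ᵀ)⁻¹ (∑ i, matVec (pdM (fun y => (B y)ᵀ) i x)
            (pdV (fun y => matVec ((B y)ᵀ)⁻¹ (gradient f y)) i x))) k = _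
    rw [t1]
    congr 1
    show 2 * matVec ((B x)ᵀ)⁻¹ (∑ i, matVec (pdM (fun y => (B y)ᵀ) i x)
        (pdV (fun y => matVec ((B y)ᵀ)⁻¹ (gradient f y)) i x)) k = _
    congr 1
    rw [matVec_apply]
    refine Finset.sum_congr rfl fun m _ => ?_
    congr 1
    rw [Esum_apply]
    refine Finset.sum_congr rfl fun i _ => ?_
    rw [matVec_apply]
    refine Finset.sum_congr rfl fun l _ => ?_
    rw [hpdVc i l]
  rw [show (LparB V B (fun y => matVec ((B y)ᵀ)⁻¹ (gradient f y)) x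
      - matVec (MB V B x) (matVec ((B x)ᵀ)⁻¹ (gradient f x))) k
      = LparB V B (fun y => matVec ((B y)ᵀ)⁻¹ (gradient f y)) x k
        - matVec (MB V B x) (matVec ((B x)ᵀ)⁻¹ (gradient f x)) k from rfl,
    eLparB, eMB, hLopGF k]
  rw [show (∑ m, ((B x)ᵀ)⁻¹ k m * ∑ i, ∑ l, pdM (fun y => (B y)ᵀ) i x m l *
        pd (fun y => ∑ j, ((B y)ᵀ)⁻¹ l j * pd f j y) i x)
      = ∑ m, ((B x)ᵀ)⁻¹ k m * ∑ i, ∑ l, pdM (fun y => (B y)ᵀ) i x m l *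
        ∑ j, (pd (fun y => ((B y)ᵀ)⁻¹ l j) i x * pd f j x
          + ((B x)ᵀ)⁻¹ l j * pd (pd f j) i x) from
    Finset.sum_congr rfl fun m _ => by
      congr 1
      exact Finset.sum_congr rfl fun i _ => Finset.sum_congr rfl fun l _ => by
        rw [hDgc i l]]
  simp only [Pi.add_apply, Pi.sub_apply, Pi.smul_apply, smul_eq_mul, Esum_apply,
    Finset.sum_apply, mulVec_apply', Matrix.of_apply]
  have split1 : (∑ j, (((B x)ᵀ)⁻¹ k j * Lop V (pd f j) x
        + pd f j x * Lop V (fun y => ((B y)ᵀ)⁻¹ k j) x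
        + 2 * ∑ i, pd (fun y => ((B y)ᵀ)⁻¹ k j) i x * pd (pd f j) i x))
      = ∑ m, ((B x)ᵀ)⁻¹ k m * Lop V (pd f m) x
        + ∑ j, Lop V (fun y => ((B y)ᵀ)⁻¹ k j) x * pd f j x
        + 2 * ∑ i, ∑ j, pd (fun y => ((B y)ᵀ)⁻¹ k j) i x * pd (pd f j) i x := by
    rw [Finset.sum_add_distrib, Finset.sum_add_distrib]
    congr 1
    · congr 1
      exact Finset.sum_congr rfl fun j _ => by ring
    · rw [← Finset.mul_sum]
      congr 1
      exact Finset.sum_comm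
  have split2 : (∑ m, ((B x)ᵀ)⁻¹ k m * ∑ i, ∑ l, pdM (fun y => (B y)ᵀ) i x m l *
          ∑ j, (pd (fun y => ((B y)ᵀ)⁻¹ l j) i x * pd f j x
            + ((B x)ᵀ)⁻¹ l j * pd (pd f j) i x))
      = ∑ m, ((B x)ᵀ)⁻¹ k m * ∑ i, ∑ l, pdM (fun y => (B y)ᵀ) i x m l *
          (∑ j, pd (fun y => ((B y)ᵀ)⁻¹ l j) i x * pd f j x
            + ∑ j, ((B x)ᵀ)⁻¹ l j * pd (pd f j) i x) := by
    refine Finset.sum_congr rfl fun m _ => ?_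
    congr 1
    refine Finset.sum_congr rfl fun i _ => ?_
    refine Finset.sum_congr rfl fun l _ => ?_
    rw [Finset.sum_add_distrib]
  rw [split1, split2]
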